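/- For all natural numbers i, j, the quantity C(2i+j+1, j)·C(i+2j+1, i)/((i+1)(j+1)) is a positive integer. -/
import Mathlib

open Nat Finset

private lemma div_small_cases (m x : ℕ) (h : x < 3 * m) :
    x / m = if 2 * m ≤ x then 2 else if m ≤ x then 1 else 0 := by
  split_ifs with h2 h1
  · exact Nat.div_eq_of_lt_le (by omega) (by omega)
  · exact Nat.div_eq_of_lt_le (by omega) (by omega)
  · exact Nat.div_eq_of_lt (by omega)

set_option maxHeartbeats 2000000 in
private lemma key_floor_ineq (m i j : ℕ) (hm2 : 2 ≤ m) :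
    (i + 1) / m + ((j + 1) / m + ((2 * i + 1) / m + (2 * j + 1) / m)) ≤
      (2 * i + j + 1) / m + (i + 2 * j + 1) / m := by
  have hm : 0 < m := by omega
  obtain ⟨q, r, hr, rfl⟩ : ∃ q r, r < m ∧ i = r + m * q :=
    ⟨i / m, i % m, Nat.mod_lt _ hm, by rw [Nat.mod_add_div]⟩
  obtain ⟨s, t, ht, rfl⟩ : ∃ s t, t < m ∧ j = t + m * s :=
    ⟨j / m, j % m, Nat.mod_lt _ hm, by rw [Nat.mod_add_div]⟩
  have e1 : r + m * q + 1 = (r + 1) + m * q := by ring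
  have e2 : t + m * s + 1 = (t + 1) + m * s := by ring
  have e3 : 2 * (r + m * q) + 1 = (2 * r + 1) + m * (2 * q) := by ring
  have e4 : 2 * (t + m * s) + 1 = (2 * t + 1) + m * (2 * s) := by ring
  have e5 : 2 * (r + m * q) + (t + m * s) + 1 = (2 * r + t + 1) + m * (2 * q + s) := by ring
  have e6 : (r + m * q) + 2 * (t + m * s) + 1 = (r + 2 * t + 1) + m * (q + 2 * s) := by ring
  rw [e1, e2, e3, e4, e5, e6, Nat.add_mul_div_left _ _ hm, Nat.add_mul_div_left _ _ hm,
    Nat.add_mul_div_left _ _ hm, Nat.add_mul_div_left _ _ hm, Nat.add_mul_div_left _ _ hm,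
    Nat.add_mul_div_left _ _ hm]
  rw [div_small_cases m (r + 1) (by omega), div_small_cases m (t + 1) (by omega),
    div_small_cases m (2 * r + 1) (by omega), div_small_cases m (2 * t + 1) (by omega),
    div_small_cases m (2 * r + t + 1) (by omega), div_small_cases m (r + 2 * t + 1) (by omega)]
  clear e1 e2 e3 e4 e5 e6
  split_ifs <;> omega

private lemma fact_dvd_fact (i j : ℕ) :
    (i + 1)! * ((j + 1)! * ((2 * i + 1)! * (2 * j + 1)!)) ∣
      (2 * i + j + 1)! * (i + 2 * j + 1)! := by
  have hL : (i + 1)! * ((j + 1)! * ((2 * i + 1)! * (2 * j + 1)!)) ≠ 0 := by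
    positivity
  have hR : (2 * i + j + 1)! * (i + 2 * j + 1)! ≠ 0 := by positivity
  rw [← Nat.factorization_le_iff_dvd hL hR, Finsupp.le_def]
  intro p
  by_cases hp : p.Prime
  · haveI : Fact p.Prime := ⟨hp⟩
    set b : ℕ := 2 * i + 2 * j + 2 with hb
    have hlog : ∀ n : ℕ, n ≤ 2 * i + 2 * j + 1 → Nat.log p n < b := by
      intro n hn
      calc Nat.log p n ≤ n := Nat.log_le_self p n
        _ < b := by omega
    rw [Nat.factorization_mul (by positivity) (by positivity),
        Nat.factorization_mul (by positivity) (by positivity),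
        Nat.factorization_mul (by positivity) (by positivity),
        Nat.factorization_mul (by positivity) (by positivity)]
    simp only [Finsupp.add_apply, Nat.factorization_def _ hp]
    rw [padicValNat_factorial (hlog _ (by omega)), padicValNat_factorial (hlog _ (by omega)),
      padicValNat_factorial (hlog _ (by omega)), padicValNat_factorial (hlog _ (by omega)),
      padicValNat_factorial (hlog _ (by omega)), padicValNat_factorial (hlog _ (by omega))]
    rw [← Finset.sum_add_distrib, ← Finset.sum_add_distrib, ← Finset.sum_add_distrib,
      ← Finset.sum_add_distrib]
    apply Finset.sum_le_sum
    intro k hk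
    have hk1 : 1 ≤ k := (Finset.mem_Ico.mp hk).1
    exact key_floor_ineq (p ^ k) i j (Nat.one_lt_pow (by omega) hp.two_le)
  · rw [Nat.factorization_eq_zero_of_not_prime _ hp]
    exact Nat.zero_le _

theorem two_param_formula_pos_integer (i j : ℕ) :
    (i + 1) * (j + 1) ∣ Nat.choose (2 * i + j + 1) j * Nat.choose (i + 2 * j + 1) i ∧
    0 < Nat.choose (2 * i + j + 1) j * Nat.choose (i + 2 * j + 1) i / ((i + 1) * (j + 1)) := by
  set C1 := Nat.choose (2 * i + j + 1) j with hC1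
  set C2 := Nat.choose (i + 2 * j + 1) i with hC2
  have h1 : C1 * j ! * (2 * i + 1)! = (2 * i + j + 1)! := by
    have := Nat.choose_mul_factorial_mul_factorial (show j ≤ 2 * i + j + 1 by omega)
    have he : 2 * i + j + 1 - j = 2 * i + 1 := by omega
    rwa [he] at this
  have h2 : C2 * i ! * (2 * j + 1)! = (i + 2 * j + 1)! := by
    have := Nat.choose_mul_factorial_mul_factorial (show i ≤ i + 2 * j + 1 by omega)
    have he : i + 2 * j + 1 - i = 2 * j + 1 := by omega
    rwa [he] at this
  have K := fact_dvd_fact i j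
  set M : ℕ := i ! * (j ! * ((2 * i + 1)! * (2 * j + 1)!)) with hM
  have eL : (i + 1)! * ((j + 1)! * ((2 * i + 1)! * (2 * j + 1)!)) = (i + 1) * (j + 1) * M := by
    rw [hM, Nat.factorial_succ, Nat.factorial_succ]; ring
  have eR : (2 * i + j + 1)! * (i + 2 * j + 1)! = C1 * C2 * M := by
    rw [hM, ← h1, ← h2]; ring
  rw [eL, eR] at K
  have hMpos : 0 < M := by positivity
  have hdvd : (i + 1) * (j + 1) ∣ C1 * C2 :=
    (Nat.mul_dvd_mul_iff_right hMpos).mp K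
  refine ⟨hdvd, Nat.div_pos (Nat.le_of_dvd ?_ hdvd) (by positivity)⟩
  exact Nat.mul_pos (Nat.choose_pos (by omega)) (Nat.choose_pos (by omega))
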